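/- Diamond poset coloring characterizes bipartiteness of the interior: Let G be a loopless digraph on a finite vertex set V and let P be the diamond poset {0, a, b, 1} with 0 < a < 1, 0 < b < 1, and a, b incomparable. Then the vertices (1-walks) of G admit a P-coloring if and only if the undirected version of the induced subdigraph of G on the vertices that are neither sources nor sinks of G is bipartite. -/

import Mathlib

/-- The undirected version of a digraph `G`: `u` and `v` are adjacent iff `u ≠ v` and at
least one of the directed edges `u → v`, `v → u` is present. -/
def undirected {V : Type*} (G : V → V → Prop) : SimpleGraph V where
  Adj u v := u ≠ v ∧ (G u v ∨ G v u)
  symm := ⟨fun _ _ h => ⟨h.1.symm, h.2.symm⟩⟩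
  loopless := ⟨fun _ h => h.1 rfl⟩

lemma fin_two_cases : ∀ x : Fin 2, x = 0 ∨ x = 1 := by decide

/-- **Diamond poset coloring characterizes bipartiteness of the interior.** Take the
diamond poset `{0, a, b, 1}` (with `0 < a < 1`, `0 < b < 1` and `a, b` incomparable),
realized as `Bool × Bool` with the componentwise order.  A loopless digraph `G` on a
finite vertex set admits a `P`-coloring of its vertices (1-walks) iff the undirected
version of the subdigraph induced on the vertices that are neither sources nor sinks is
bipartite (2-colorable). -/
theorem diamond_coloring_iff_interior_bipartite {V : Type*} [Fintype V]
    (G : V → V → Prop) (hG : ∀ v, ¬ G v v) :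
    (∃ c : V → Bool × Bool, ∀ u v : V, G u v → ¬ c u ≤ c v) ↔
      ((undirected G).induce {v : V | (∃ u, G u v) ∧ (∃ u, G v u)}).Colorable 2 := by
  classical
  constructor
  · rintro ⟨c, hc⟩
    have key : ∀ v : V, (∃ u, G u v) → (∃ u, G v u) → (c v).1 = !(c v).2 := by
      rintro v ⟨u, hu⟩ ⟨w, hw⟩
      have h1 : c v ≠ (false, false) := by
        intro h
        exact hc v w hw (h ▸ ⟨Bool.false_le _, Bool.false_le _⟩)
      have h2 : c v ≠ (true, true) := by
        intro h
        exact hc u v hu (h ▸ ⟨Bool.le_true _, Bool.le_true _⟩)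
      rcases hcv : c v with ⟨x, y⟩
      rw [hcv] at h1 h2
      cases x <;> cases y <;> simp_all
    have col : ((undirected G).induce {v : V | (∃ u, G u v) ∧ (∃ u, G v u)}).Coloring Bool := by
      refine SimpleGraph.Coloring.mk (fun v => (c v.1).1) ?_
      rintro ⟨u, hu⟩ ⟨v, hv⟩ hadj heq
      obtain ⟨hne, hor⟩ := hadj
      simp only at heq
      have h1 := key u hu.1 hu.2
      have h2 := key v hv.1 hv.2
      have hcc : c u = c v := by
        have : (c u).2 = (c v).2 := by
          have := heq
          rw [h1, h2] at this
          simpa using this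
        exact Prod.ext heq this
      cases hor with
      | inl h => exact hc u v h (hcc ▸ le_refl _)
      | inr h => exact hc v u h (hcc ▸ le_refl _)
    simpa using col.colorable
  · rintro ⟨C⟩
    refine ⟨fun v => if h1 : ∃ u, G u v then
        if h2 : ∃ u, G v u then
          (if C ⟨v, ⟨h1, h2⟩⟩ = 0 then (false, true) else (true, false))
        else (false, false)
      else (true, true), ?_⟩
    intro u v huv
    have hne : u ≠ v := fun h => hG u (h ▸ huv)
    have hv1 : ∃ w, G w v := ⟨u, huv⟩
    have hu2 : ∃ w, G u w := ⟨v, huv⟩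
    by_cases hu1 : ∃ w, G w u
    · by_cases hv2 : ∃ w, G v w
      · simp only [dif_pos hu1, dif_pos hu2, dif_pos hv1, dif_pos hv2]
        have hC : C ⟨u, ⟨hu1, hu2⟩⟩ ≠ C ⟨v, ⟨hv1, hv2⟩⟩ :=
          C.valid ⟨hne, Or.inl huv⟩
        rcases fin_two_cases (C ⟨u, ⟨hu1, hu2⟩⟩) with h | h <;>
          rcases fin_two_cases (C ⟨v, ⟨hv1, hv2⟩⟩) with h' | h' <;>
          rw [h, h'] at hC ⊢ <;> first | exact absurd rfl hC | decide
      · simp only [dif_pos hu1, dif_pos hu2, dif_pos hv1, dif_neg hv2]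
        split_ifs <;> decide
    · simp only [dif_neg hu1, dif_pos hv1]
      split_ifs <;> decide
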